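/- Let Σ be a type, Q a finite type with decidable equality, and (Q, q0, δ) a permutation-reset transparent Moore machine (for every a : Σ the map q ↦ δ q a is bijective or constant). Then there exist a transition δ̃ : Equiv.Perm Q → Σ → Equiv.Perm Q such that for every a : Σ the map h ↦ δ̃ h a is bijective (a permutation machine on states Equiv.Perm Q with start 1), and a transition δ⃗ : Q → (Σ × Equiv.Perm Q) → Q such that for every input character c : Σ × Equiv.Perm Q the map q ↦ δ⃗ q c is either the identity or constant (a reset machine on states Q with start q0), such that for every w : List Σ: List.scanl δ q0 w = List.zipWith (fun h q => h q) (List.scanl δ̃ 1 w) (List.scanl δ⃗ q0 (w.zip ((List.scanl δ̃ 1 w).dropLast))). -/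

import Mathlib

/-- Every permutation-reset transparent Moore machine decomposes into
a permutation machine (on the group of permutations of its states) cascaded with a
reset machine, combined by a character-wise application map. -/
theorem permutationReset_decomposition {A Q : Type*} [Fintype Q] [DecidableEq Q]
    (q0 : Q) (δ : Q → A → Q)
    (hpr : ∀ a : A, Function.Bijective (fun q => δ q a) ∨ ∃ p : Q, ∀ q : Q, δ q a = p) :
    ∃ δperm : Equiv.Perm Q → A → Equiv.Perm Q,
      (∀ a : A, Function.Bijective (fun h => δperm h a)) ∧
      ∃ δreset : Q → (A × Equiv.Perm Q) → Q,
        (∀ c : A × Equiv.Perm Q,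
          (∀ q : Q, δreset q c = q) ∨ ∃ p : Q, ∀ q : Q, δreset q c = p) ∧
        ∀ w : List A,
          List.scanl δ q0 w =
            List.zipWith (fun (h : Equiv.Perm Q) (q : Q) => h q)
              (List.scanl δperm 1 w)
              (List.scanl δreset q0 (w.zip ((List.scanl δperm 1 w).dropLast))) := by
  classical
  set g : A → Equiv.Perm Q := fun a =>
    if h : Function.Bijective (fun q => δ q a) then Equiv.ofBijective _ h else 1 with hg
  set pm : A → Q := fun a =>
    if h : Function.Bijective (fun q => δ q a) then q0
    else Classical.choose ((hpr a).resolve_left h) with hpm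
  refine ⟨fun h a => g a * h, ?_, fun q c =>
      if Function.Bijective (fun q => δ q c.1) then q else c.2⁻¹ (pm c.1), ?_, ?_⟩
  · intro a
    exact (Equiv.mulLeft (g a)).bijective
  · intro c
    by_cases hb : Function.Bijective (fun q => δ q c.1)
    · left; intro q; simp only [if_pos hb]
    · right; exact ⟨c.2⁻¹ (pm c.1), fun q => by simp only [if_neg hb]⟩
  · -- key invariant lemma
    have key : ∀ (w : List A) (h0 : Equiv.Perm Q) (r0 : Q),
        List.scanl δ (h0 r0) w =
          List.zipWith (fun (h : Equiv.Perm Q) (q : Q) => h q)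
            (List.scanl (fun h a => g a * h) h0 w)
            (List.scanl (fun q (c : A × Equiv.Perm Q) =>
                if Function.Bijective (fun q => δ q c.1) then q else c.2⁻¹ (pm c.1)) r0
              (w.zip ((List.scanl (fun h a => g a * h) h0 w).dropLast))) := by
      intro w
      induction w with
      | nil => intro h0 r0; simp
      | cons a w ih =>
        intro h0 r0
        have hne : List.scanl (fun h a => g a * h) (g a * h0) w ≠ [] := by
          intro h
          have hlen := congrArg List.length h
          rw [List.length_scanl] at hlen
          simp at hlen
        rw [List.scanl_cons, List.scanl_cons,
          List.dropLast_cons_of_ne_nil hne,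
          List.zip_cons_cons, List.scanl_cons, List.zipWith_cons_cons]
        have step : δ (h0 r0) a =
            (g a * h0) (if Function.Bijective (fun q => δ q a) then r0 else h0⁻¹ (pm a)) := by
          by_cases hb : Function.Bijective (fun q => δ q a)
          · have hga : g a = Equiv.ofBijective _ hb := dif_pos hb
            rw [if_pos hb, hga]
            rfl
          · have hp := Classical.choose_spec ((hpr a).resolve_left hb)
            have hga : g a = 1 := dif_neg hb
            have hpa : pm a = Classical.choose ((hpr a).resolve_left hb) := dif_neg hb
            rw [if_neg hb, hga, one_mul, hpa, Equiv.Perm.coe_inv, Equiv.apply_symm_apply, hp]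
        rw [step, ih]
    intro w
    simpa using key w 1 q0
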